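/- Let φ: R' → R be a component-wise isomorphic epimorphism of graded rings, M ⊆ R^+ a multiplicative submonoid of nonzero homogeneous elements and M' := φ^{-1}(M) ∩ R'^+. Then the induced map M'^{-1}R' → M^{-1}R on localizations is again a component-wise isomorphic epimorphism. In particular, for f' ∈ R'^+ the induced map R'_{f'} → R_{φ(f')} is a CIE. -/

import Mathlib

section

variable {K R : Type*} [AddCommGroup K] [DecidableEq K] [CommRing R]

/-- The submonoid of homogeneous elements of a graded ring. -/
def homSubmonoid (𝒜 : K → AddSubgroup R) [GradedRing 𝒜] : Submonoid R where
  carrier := {r : R | SetLike.IsHomogeneousElem 𝒜 r}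
  one_mem' := SetLike.isHomogeneousElem_one 𝒜
  mul_mem' := fun ha hb => SetLike.IsHomogeneousElem.mul ha hb

/-- The degree `w` component of the localization of a graded ring at a submonoid `M` of
homogeneous elements: fractions `r / m` with `r` of degree `u`, `m` of degree `v`
and `u = w + v`. -/
def locComponent (𝒜 : K → AddSubgroup R) [GradedRing 𝒜] (M : Submonoid R) (w : K) :
    Set (Localization M) :=
  {x | ∃ (r m : R) (hm : m ∈ M) (u v : K),
    r ∈ 𝒜 u ∧ m ∈ 𝒜 v ∧ u = w + v ∧ x = Localization.mk r ⟨m, hm⟩}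

/-- Let `φ : R' → R` be a CIE, `M ⊆ R⁺` a submonoid of nonzero homogeneous
elements and `M' := φ⁻¹(M) ∩ R'⁺`. Then the induced map `M'⁻¹R' → M⁻¹R` is again a CIE:
it is surjective and restricts to bijections between the homogeneous components. -/
theorem stmt_8 {K' R' : Type*} [AddCommGroup K'] [DecidableEq K'] [CommRing R']
    (𝒜' : K' → AddSubgroup R') [GradedRing 𝒜'] (𝒜 : K → AddSubgroup R) [GradedRing 𝒜]
    (φ : R' →+* R) (ψ : K' →+ K) (hψ : Function.Surjective ψ)
    (hφ : Function.Surjective φ)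
    (hmap : ∀ (w' : K') (r : R'), r ∈ 𝒜' w' → φ r ∈ 𝒜 (ψ w'))
    (hinj : ∀ (w' : K') (r s : R'), r ∈ 𝒜' w' → s ∈ 𝒜' w' → φ r = φ s → r = s)
    (hsur : ∀ (w' : K') (y : R), y ∈ 𝒜 (ψ w') → ∃ r ∈ 𝒜' w', φ r = y)
    (M : Submonoid R) (hM : (M : Set R) ⊆ {r : R | SetLike.IsHomogeneousElem 𝒜 r ∧ r ≠ 0}) :
    letI M' : Submonoid R' := Submonoid.comap φ M ⊓ homSubmonoid 𝒜'
    letI Φ : Localization M' → Localization M :=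
      IsLocalization.map (Localization M) φ
        (le_trans inf_le_left (le_of_eq rfl) : M' ≤ Submonoid.comap φ M)
    Function.Surjective Φ ∧
      ∀ w' : K', Set.BijOn Φ (locComponent 𝒜' M' w') (locComponent 𝒜 M (ψ w')) := by
  set M' : Submonoid R' := Submonoid.comap φ M ⊓ homSubmonoid 𝒜' with hM'def
  have hle : M' ≤ Submonoid.comap φ M := inf_le_left
  -- Φ on mk
  have hΦmk : ∀ (r : R') (m : R') (hm : m ∈ M'),
      IsLocalization.map (Localization M) φ hle (Localization.mk r ⟨m, hm⟩)
        = Localization.mk (φ r) ⟨φ m, hm.1⟩ := by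
    intro r m hm
    rw [Localization.mk_eq_mk'_apply, IsLocalization.map_mk', Localization.mk_eq_mk'_apply]
  -- surjectivity
  have hsurj : ∀ x : Localization M, ∃ y : Localization M',
      IsLocalization.map (Localization M) φ hle y = x := by
    intro x
    induction x using Localization.induction_on with
    | _ p =>
    obtain ⟨r, m, hm⟩ := p
    obtain ⟨v, hmv⟩ := (hM hm).1
    obtain ⟨v', rfl⟩ := hψ v
    obtain ⟨m', hm'v, hm'⟩ := hsur v' m hmv
    obtain ⟨r', rfl⟩ := hφ r
    have hm'M : m' ∈ M' := ⟨by simpa [Submonoid.mem_comap, hm'] using hm, ⟨v', hm'v⟩⟩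
    refine ⟨Localization.mk r' ⟨m', hm'M⟩, ?_⟩
    rw [hΦmk]
    congr 1
    exact Subtype.ext hm'
  refine ⟨hsurj, fun w' => ⟨?_, ?_, ?_⟩⟩
  · -- MapsTo
    rintro x ⟨r, m, hm, u, v, hr, hmv, huv, rfl⟩
    exact ⟨φ r, φ m, hm.1, ψ u, ψ v, hmap u r hr, hmap v m hmv,
      by rw [huv, map_add], hΦmk r m hm⟩
  · -- InjOn
    rintro x ⟨r₁, m₁, hm₁, u₁, v₁, hr₁, hmv₁, huv₁, rfl⟩
      y ⟨r₂, m₂, hm₂, u₂, v₂, hr₂, hmv₂, huv₂, rfl⟩ hxy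
    rw [hΦmk, hΦmk, Localization.mk_eq_mk_iff, Localization.r_iff_exists] at hxy
    obtain ⟨⟨c, hc⟩, hceq⟩ := hxy
    simp only at hceq
    obtain ⟨t, hct⟩ := (hM hc).1
    obtain ⟨t', rfl⟩ := hψ t
    obtain ⟨c', hc't, hc'⟩ := hsur t' c hct
    have hc'M : c' ∈ M' := ⟨by simpa [Submonoid.mem_comap, hc'] using hc, ⟨t', hc't⟩⟩
    rw [Localization.mk_eq_mk_iff, Localization.r_iff_exists]
    refine ⟨⟨c', hc'M⟩, ?_⟩
    have h1 : c' * (m₂ * r₁) ∈ 𝒜' (t' + (v₂ + u₁)) :=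
      SetLike.mul_mem_graded hc't (SetLike.mul_mem_graded hmv₂ hr₁)
    have h2 : c' * (m₁ * r₂) ∈ 𝒜' (t' + (v₂ + u₁)) := by
      have : t' + (v₁ + u₂) = t' + (v₂ + u₁) := by rw [huv₁, huv₂]; abel
      exact this ▸ SetLike.mul_mem_graded hc't (SetLike.mul_mem_graded hmv₁ hr₂)
    exact hinj _ _ _ h1 h2 (by push_cast; rw [map_mul, map_mul, map_mul, map_mul, hc']; exact hceq)
  · -- SurjOn
    rintro x ⟨r, m, hm, u, v, hr, hmv, huv, rfl⟩
    obtain ⟨v', rfl⟩ := hψ v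
    obtain ⟨m', hm'v, hm'⟩ := hsur v' m hmv
    have hm'M : m' ∈ M' := ⟨by simpa [Submonoid.mem_comap, hm'] using hm, ⟨v', hm'v⟩⟩
    have hu : u = ψ (w' + v') := by rw [map_add, huv]
    obtain ⟨r', hr'u, hr'⟩ := hsur (w' + v') r (hu ▸ hr)
    refine ⟨Localization.mk r' ⟨m', hm'M⟩,
      ⟨r', m', hm'M, w' + v', v', hr'u, hm'v, rfl, rfl⟩, ?_⟩
    rw [hΦmk]
    simp only [hr', hm']

end
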